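/- For α > 1, the function ρ(φ) = (∑_{k≥0} k φ^k / a(k)) / (∑_{k≥0} φ^k / a(k)) is strictly increasing on (0,1). -/

import Mathlib

section Aux

private lemma sign_aux {p q : ℝ} (hp : 0 < p) (hpq : p ≤ q) {j k : ℕ} (hjk : j ≤ k) :
    0 ≤ ((k : ℝ) - j) * (q ^ k * p ^ j - q ^ j * p ^ k) := by
  obtain ⟨m, rfl⟩ := Nat.exists_eq_add_of_le hjk
  have h1 : (0:ℝ) ≤ (j + m : ℕ) - (j:ℝ) := by push_cast; linarith
  have h2 : p ^ m ≤ q ^ m := pow_le_pow_left₀ hp.le hpq m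
  have h3 : (0:ℝ) ≤ q ^ j * p ^ j * (q ^ m - p ^ m) :=
    mul_nonneg (mul_nonneg (pow_nonneg (hp.le.trans hpq) j) (pow_nonneg hp.le j))
      (sub_nonneg.mpr h2)
  have h4 : q ^ (j + m) * p ^ j - q ^ j * p ^ (j + m)
      = q ^ j * p ^ j * (q ^ m - p ^ m) := by rw [pow_add, pow_add]; ring
  exact mul_nonneg h1 (by linarith [h3, h4.ge])

private lemma sign_key {p q : ℝ} (hp : 0 < p) (hpq : p ≤ q) (j k : ℕ) :
    0 ≤ ((k : ℝ) - j) * (q ^ k * p ^ j - q ^ j * p ^ k) := by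
  rcases le_total j k with h | h
  · exact sign_aux hp hpq h
  · have := sign_aux hp hpq h
    nlinarith [this]

end Aux

set_option maxHeartbeats 2000000 in
/-- For α > 1, the density ρ(φ) = (∑_{k≥0} k φ^k/a(k)) / (∑_{k≥0} φ^k/a(k))
is strictly increasing on (0,1). -/
theorem stmt_4 (α : ℝ) (hα : 1 < α) (a : ℕ → ℝ)
    (ha0 : a 0 = 1) (ha : ∀ k : ℕ, 1 ≤ k → a k = (k : ℝ) ^ α) :
    StrictMonoOn
      (fun φ : ℝ => (∑' k : ℕ, (k : ℝ) * φ ^ k / a k) / (∑' k : ℕ, φ ^ k / a k))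
      (Set.Ioo 0 1) := by
  -- basic facts about a
  have ha1' : a 1 = 1 := by rw [ha 1 le_rfl]; norm_num
  have hage : ∀ k, 1 ≤ a k := by
    intro k
    rcases Nat.eq_zero_or_pos k with rfl | hk
    · simp [ha0]
    · rw [ha k hk]
      exact Real.one_le_rpow (by exact_mod_cast hk) (by linarith)
  have hapos : ∀ k, 0 < a k := fun k => lt_of_lt_of_le one_pos (hage k)
  -- summability
  have hF : ∀ r : ℝ, 0 < r → r < 1 → Summable (fun k : ℕ => r ^ k / a k) := by
    intro r hr0 hr1
    refine Summable.of_nonneg_of_le (fun k => by have := hapos k; positivity)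
      (fun k => ?_) (summable_geometric_of_lt_one hr0.le hr1)
    exact div_le_self (by positivity) (hage k)
  have hG : ∀ r : ℝ, 0 < r → r < 1 → Summable (fun k : ℕ => (k : ℝ) * r ^ k / a k) := by
    intro r hr0 hr1
    have hs : Summable (fun k : ℕ => (k : ℝ) * r ^ k) := by
      have := summable_pow_mul_geometric_of_norm_lt_one (R := ℝ) 1
        (r := r) (by rw [Real.norm_eq_abs, abs_of_pos hr0]; exact hr1)
      simpa using this
    refine Summable.of_nonneg_of_le (fun k => by have := hapos k; positivity) (fun k => ?_) hs
    exact div_le_self (by positivity) (hage k)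
  -- positivity of denominator
  have hFpos : ∀ r : ℝ, 0 < r → r < 1 → 0 < ∑' k : ℕ, r ^ k / a k := by
    intro r hr0 hr1
    refine Summable.tsum_pos (hF r hr0 hr1) (fun k => by have := hapos k; positivity) 0 ?_
    simp [ha0]
  intro p hp q hq hpq
  obtain ⟨hp0, hp1⟩ := hp
  obtain ⟨hq0, hq1⟩ := hq
  simp only
  rw [div_lt_div_iff₀ (hFpos p hp0 hp1) (hFpos q hq0 hq1)]
  -- define product terms
  set A : ℕ × ℕ → ℝ := fun x => ((x.1 : ℝ) * q ^ x.1 / a x.1) * (p ^ x.2 / a x.2) with hA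
  set B : ℕ × ℕ → ℝ := fun x => ((x.1 : ℝ) * p ^ x.1 / a x.1) * (q ^ x.2 / a x.2) with hB
  have hnormF : ∀ r : ℝ, 0 < r → r < 1 → Summable (fun k : ℕ => ‖r ^ k / a k‖) := by
    intro r hr0 hr1
    have := hF r hr0 hr1
    refine this.congr fun k => ?_
    have := hapos k
    rw [Real.norm_of_nonneg (by positivity)]
  have hnormG : ∀ r : ℝ, 0 < r → r < 1 → Summable (fun k : ℕ => ‖(k:ℝ) * r ^ k / a k‖) := by
    intro r hr0 hr1
    have := hG r hr0 hr1
    refine this.congr fun k => ?_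
    have := hapos k
    rw [Real.norm_of_nonneg (by positivity)]
  have hAs : Summable A := summable_mul_of_summable_norm (hnormG q hq0 hq1) (hnormF p hp0 hp1)
  have hBs : Summable B := summable_mul_of_summable_norm (hnormG p hp0 hp1) (hnormF q hq0 hq1)
  have hAeq : (∑' k : ℕ, (k : ℝ) * q ^ k / a k) * (∑' k : ℕ, p ^ k / a k) = ∑' x, A x :=
    Summable.tsum_mul_tsum (hG q hq0 hq1) (hF p hp0 hp1) hAs
  have hBeq : (∑' k : ℕ, (k : ℝ) * p ^ k / a k) * (∑' k : ℕ, q ^ k / a k) = ∑' x, B x :=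
    Summable.tsum_mul_tsum (hG p hp0 hp1) (hF q hq0 hq1) hBs
  rw [hAeq, hBeq]
  -- rewrite B via the swap
  set B' : ℕ × ℕ → ℝ := fun x => B x.swap with hB'
  have hB's : Summable B' := (Equiv.prodComm ℕ ℕ).summable_iff.mpr hBs
  have hB'eq : ∑' x, B' x = ∑' x, B x := (Equiv.prodComm ℕ ℕ).tsum_eq B
  rw [← hB'eq]
  -- the difference function
  set H : ℕ × ℕ → ℝ :=
    fun x => ((x.1 : ℝ) - x.2) * q ^ x.1 * p ^ x.2 / (a x.1 * a x.2) with hH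
  have hHs : Summable H := by
    have := hAs.sub hB's
    refine this.congr fun x => ?_
    simp only [hA, hB', hB, Equiv.prodComm_apply, hH, Prod.fst_swap, Prod.snd_swap]
    field_simp
  have hdiff : ∑' x, H x = (∑' x, A x) - ∑' x, B' x := by
    rw [← Summable.tsum_sub hAs hB's]
    refine tsum_congr fun x => ?_
    simp only [hA, hB', hB, hH, Prod.fst_swap, Prod.snd_swap]
    field_simp
  have hmain : 0 < ∑' x, H x := by
    -- symmetrize
    set Hs : ℕ × ℕ → ℝ := fun x => H x.swap with hHs'
    have hHss : Summable Hs := (Equiv.prodComm ℕ ℕ).summable_iff.mpr hHs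
    have hHseq : ∑' x, Hs x = ∑' x, H x := (Equiv.prodComm ℕ ℕ).tsum_eq H
    set K : ℕ × ℕ → ℝ := fun x => (H x + Hs x) / 2 with hK
    have hKs : Summable K := (hHs.add hHss).div_const 2
    have hKeq : ∑' x, K x = ∑' x, H x := by
      have : ∑' x, K x = ((∑' x, H x) + ∑' x, Hs x) / 2 := by
        rw [← Summable.tsum_add hHs hHss, tsum_div_const]
      rw [this, hHseq]; ring
    rw [← hKeq]
    have hKnn : ∀ x : ℕ × ℕ, 0 ≤ K x := by
      rintro ⟨k, j⟩
      have := sign_key hp0 hpq.le j k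
      have h1 : 0 < a k := hapos k
      have h2 : 0 < a j := hapos j
      simp only [hK, hHs', hH, Prod.fst_swap, Prod.snd_swap]
      rw [mul_comm (a j) (a k), ← add_div]
      have hnum : 0 ≤ ((k : ℝ) - j) * q ^ k * p ^ j + ((j : ℝ) - k) * q ^ j * p ^ k := by
        have hexp : ((k : ℝ) - j) * q ^ k * p ^ j + ((j : ℝ) - k) * q ^ j * p ^ k
            = ((k : ℝ) - j) * (q ^ k * p ^ j - q ^ j * p ^ k) := by ring
        rw [hexp]
        exact sign_key hp0 hpq.le j k
      exact div_nonneg (div_nonneg hnum (by positivity)) (by norm_num)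
    refine Summable.tsum_pos hKs hKnn (1, 0) ?_
    have : K (1, 0) = (q - p) / 2 := by
      simp [hK, hHs', hH, ha0, ha1']
      ring
    rw [this]
    linarith
  linarith [hdiff, hmain]
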